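/- Let H be a bialgebra over ℂ, F a Drinfel'd twist on H, and A an H-module algebra over ℂ whose underlying algebra is commutative, equipped with a ℂ-antilinear involution a ↦ a* satisfying (a·b)* = a*·b*. Let σ : H → H be a ring automorphism such that (ρ(h)(a))* = ρ(σ(h))(a*) for all h ∈ H and a ∈ A, and assume F is Hermitian relative to σ, i.e. (σ ⊗ σ)(F⁻¹) = τ(F⁻¹), equivalently Σ_k σ(f̄^k) ⊗ σ(f̄_k) = Σ_k f̄_k ⊗ f̄^k. Then the involution is an anti-automorphism of the star-product: (a ⋆ b)* = b* ⋆ a* for all a, b ∈ A. -/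

import Mathlib

open scoped TensorProduct

noncomputable section

/-- `Δ ⊗ id` as an algebra homomorphism `H ⊗ H → (H ⊗ H) ⊗ H`. -/
def comulTensorId (R H : Type*) [CommRing R] [Ring H] [Bialgebra R H] :
    (H ⊗[R] H) →ₐ[R] (H ⊗[R] H) ⊗[R] H :=
  Algebra.TensorProduct.map (Bialgebra.comulAlgHom R H) (AlgHom.id R H)

/-- `id ⊗ Δ` as an algebra homomorphism `H ⊗ H → H ⊗ (H ⊗ H)`. -/
def idTensorComul (R H : Type*) [CommRing R] [Ring H] [Bialgebra R H] :
    (H ⊗[R] H) →ₐ[R] H ⊗[R] (H ⊗[R] H) :=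
  Algebra.TensorProduct.map (AlgHom.id R H) (Bialgebra.comulAlgHom R H)

/-- `F` is a Drinfel'd twist on the bialgebra `H` with two-sided inverse `Finv`:
it is invertible and satisfies the 2-cocycle condition
`(F ⊗ 1) · (Δ ⊗ id)(F) = (1 ⊗ F) · (id ⊗ Δ)(F)` in `H ⊗ H ⊗ H`. -/
def IsDrinfeldTwist (R : Type*) {H : Type*} [CommRing R] [Ring H] [Bialgebra R H]
    (F Finv : H ⊗[R] H) : Prop :=
  F * Finv = 1 ∧ Finv * F = 1 ∧
    (TensorProduct.assoc R H H H) ((F ⊗ₜ[R] (1 : H)) * comulTensorId R H F) =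
      ((1 : H) ⊗ₜ[R] F) * idTensorComul R H F

/-- The action of an element of `H ⊗ H` on `M ⊗ N`, acting with the first leg on `M`
and the second leg on `N` through the given representations. -/
def legAct {R H : Type*} [CommRing R] [Ring H] [Algebra R H]
    {M N : Type*} [AddCommGroup M] [Module R M] [AddCommGroup N] [Module R N]
    (ρM : H →ₐ[R] Module.End R M) (ρN : H →ₐ[R] Module.End R N) :
    H ⊗[R] H →ₗ[R] (M ⊗[R] N →ₗ[R] M ⊗[R] N) :=
  (TensorProduct.homTensorHomMap (RingHom.id R) M N M N).comp
    (TensorProduct.map ρM.toLinearMap ρN.toLinearMap)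

/-- `ρ` makes the `R`-algebra `A` into an `H`-module algebra:
`ρ(h)(a·b) = Σ ρ(h₍₁₎)(a) · ρ(h₍₂₎)(b)`. -/
def IsModuleAlgebra (R : Type*) {H A : Type*} [CommRing R] [Ring H] [Bialgebra R H]
    [Ring A] [Algebra R A] (ρ : H →ₐ[R] Module.End R A) : Prop :=
  ∀ (h : H) (a b : A),
    ρ h (a * b) =
      LinearMap.mul' R A (legAct ρ ρ (Coalgebra.comul (R := R) h) (a ⊗ₜ[R] b))

/-- The star-product `a ⋆ b := Σ f̄ᵏ(a) · f̄ₖ(b)`, as a linear map on `A ⊗ A`. -/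
def starProd {R H A : Type*} [CommRing R] [Ring H] [Bialgebra R H] [Ring A] [Algebra R A]
    (ρ : H →ₐ[R] Module.End R A) (Finv : H ⊗[R] H) : A ⊗[R] A →ₗ[R] A :=
  (LinearMap.mul' R A).comp (legAct ρ ρ Finv)

/-- For a Hermitian Drinfel'd twist `F` on a bialgebra `H` over `ℂ`
and an `H`-module algebra `A` with commutative underlying algebra, equipped with a
`ℂ`-antilinear involution `a ↦ a*` compatible with a ring automorphism `σ` of `H`
(`(ρ(h)(a))* = ρ(σ(h))(a*)`), where Hermiticity means
`Σ_k σ(f̄ᵏ) ⊗ σ(f̄ₖ) = Σ_k f̄ₖ ⊗ f̄ᵏ`, the involution is an anti-automorphism of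
the star-product: `(a ⋆ b)* = b* ⋆ a*`. -/
theorem star_involution_antiautomorphism
    (H : Type*) [Ring H] [Bialgebra ℂ H]
    (A : Type*) [CommRing A] [Algebra ℂ A]
    (ρ : H →ₐ[ℂ] Module.End ℂ A) (hA : IsModuleAlgebra ℂ ρ)
    (F Finv : H ⊗[ℂ] H) (hF : IsDrinfeldTwist ℂ F Finv)
    (ι : Type*) [Fintype ι] (g₁ g₂ : ι → H)
    (hrep : Finv = ∑ i, g₁ i ⊗ₜ[ℂ] g₂ i)
    (st : A → A)
    (hadd : ∀ a b : A, st (a + b) = st a + st b)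
    (hsmul : ∀ (c : ℂ) (a : A), st (c • a) = (starRingEnd ℂ) c • st a)
    (hinvol : ∀ a : A, st (st a) = a)
    (hmul : ∀ a b : A, st (a * b) = st a * st b)
    (σ : H ≃+* H)
    (hσ : ∀ (h : H) (a : A), st (ρ h a) = ρ (σ h) (st a))
    (hherm : ∑ i, σ (g₁ i) ⊗ₜ[ℂ] σ (g₂ i) = ∑ i, g₂ i ⊗ₜ[ℂ] g₁ i) :
    ∀ a b : A,
      st (starProd ρ Finv (a ⊗ₜ[ℂ] b)) =
        starProd ρ Finv ((st b) ⊗ₜ[ℂ] (st a)) := by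
  intro a b
  have hst0 : st 0 = 0 := by simpa using hsmul 0 0
  have hstsum : ∀ (f : ι → A), st (∑ i, f i) = ∑ i, st (f i) := by
    intro f
    classical
    induction (Finset.univ : Finset ι) using Finset.induction with
    | empty => simpa using hst0
    | insert _ _ h ih => rw [Finset.sum_insert h, Finset.sum_insert h, hadd, ih]
  have key := congrArg
    (fun x => LinearMap.mul' ℂ A (legAct ρ ρ x ((st a) ⊗ₜ[ℂ] (st b)))) hherm
  simp only [map_sum, LinearMap.sum_apply, legAct, LinearMap.coe_comp, Function.comp_apply,
    TensorProduct.map_tmul, TensorProduct.homTensorHomMap_apply, AlgHom.toLinearMap_apply,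
    LinearMap.mul'_apply] at key
  simp only [starProd, hrep, map_sum, LinearMap.sum_apply, legAct, LinearMap.coe_comp,
    Function.comp_apply, TensorProduct.map_tmul, TensorProduct.homTensorHomMap_apply,
    AlgHom.toLinearMap_apply, LinearMap.mul'_apply, hstsum, hmul, hσ]
  rw [key]
  exact Finset.sum_congr rfl fun i _ => mul_comm _ _
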